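/- The subalgebra of ρ-invariants {f ∈ R : ρ(f) = f} equals the (ZMod 2)-subalgebra of R generated by the three elements a, b₊ and b₋ (i.e., it equals Algebra.adjoin (ZMod 2) {a, b₊, b₋}). -/

import Mathlib

open MvPolynomial

/-- `a = x₁² + x₁x₂ + x₂²` in `(ZMod 2)[x₁, x₂]`. -/
noncomputable def aA4 : MvPolynomial (Fin 2) (ZMod 2) :=
  X 0 ^ 2 + X 0 * X 1 + X 1 ^ 2

/-- `b₊ = x₁³ + x₁²x₂ + x₂³` in `(ZMod 2)[x₁, x₂]`. -/
noncomputable def bPlus : MvPolynomial (Fin 2) (ZMod 2) :=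
  X 0 ^ 3 + X 0 ^ 2 * X 1 + X 1 ^ 3

/-- `b₋ = x₁³ + x₁x₂² + x₂³` in `(ZMod 2)[x₁, x₂]`. -/
noncomputable def bMinus : MvPolynomial (Fin 2) (ZMod 2) :=
  X 0 ^ 3 + X 0 * X 1 ^ 2 + X 1 ^ 3

/-- The `(ZMod 2)`-algebra endomorphism `ρ` of `(ZMod 2)[x₁, x₂]` determined by
`ρ(x₁) = x₂` and `ρ(x₂) = x₁ + x₂`. -/
noncomputable def rhoA4 :
    MvPolynomial (Fin 2) (ZMod 2) →ₐ[ZMod 2] MvPolynomial (Fin 2) (ZMod 2) :=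
  aeval ![X 1, X 0 + X 1]

namespace A4Aux

abbrev RR := MvPolynomial (Fin 2) (ZMod 2)

noncomputable def cA4 : RR := bPlus + bMinus

noncomputable def piA4 (f : RR) : RR := f + rhoA4 f + rhoA4 (rhoA4 f)

noncomputable def PA4 (i j : ℕ) : RR := piA4 (X 0 ^ i * X 1 ^ j)

lemma h2 : (2 : RR) = 0 := by
  rw [← map_ofNat (C : ZMod 2 →+* RR) 2, show (2 : ZMod 2) = 0 by decide, map_zero]

lemma simp_rho_set : True := trivial

lemma rho_a : rhoA4 aA4 = aA4 := by
  simp only [rhoA4, aA4, map_add, map_mul, map_pow, aeval_X, Matrix.cons_val_zero,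
    Matrix.cons_val_one, Matrix.head_cons]
  linear_combination (X 1 ^ 2 + X 0 * X 1) * h2

lemma rho_bp : rhoA4 bPlus = bPlus := by
  simp only [rhoA4, bPlus, map_add, map_mul, map_pow, aeval_X, Matrix.cons_val_zero,
    Matrix.cons_val_one, Matrix.head_cons]
  linear_combination (X 1 ^ 3 + 2 * X 0 * X 1 ^ 2 + X 0 ^ 2 * X 1) * h2

lemma rho_bm : rhoA4 bMinus = bMinus := by
  simp only [rhoA4, bMinus, map_add, map_mul, map_pow, aeval_X, Matrix.cons_val_zero,
    Matrix.cons_val_one, Matrix.head_cons]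
  linear_combination (X 1 ^ 3 + 2 * X 0 * X 1 ^ 2 + 2 * X 0 ^ 2 * X 1) * h2

lemma rho_c : rhoA4 cA4 = cA4 := by
  simp only [cA4, map_add, rho_bp, rho_bm]

lemma piA4_add (f g : RR) : piA4 (f + g) = piA4 f + piA4 g := by
  simp only [piA4, map_add]; ring

lemma piA4_mul (u f : RR) (hu : rhoA4 u = u) : piA4 (u * f) = u * piA4 f := by
  simp only [piA4, map_mul, hu]; ring

lemma x3 : (X 0 : RR) ^ 3 = aA4 * X 0 + cA4 := by
  simp only [aA4, cA4, bPlus, bMinus]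
  linear_combination (-(X 1 ^ 3) - X 0 * X 1 ^ 2 - X 0 ^ 2 * X 1 - X 0 ^ 3) * h2

lemma y3 : (X 1 : RR) ^ 3 = aA4 * X 1 + cA4 := by
  simp only [aA4, cA4, bPlus, bMinus]
  linear_combination (-(X 1 ^ 3) - X 0 * X 1 ^ 2 - X 0 ^ 2 * X 1 - X 0 ^ 3) * h2

lemma recX (i j : ℕ) : PA4 (i + 3) j = aA4 * PA4 (i + 1) j + cA4 * PA4 i j := by
  have : (X 0 : RR) ^ (i + 3) * X 1 ^ j
      = aA4 * (X 0 ^ (i + 1) * X 1 ^ j) + cA4 * (X 0 ^ i * X 1 ^ j) := by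
    have h := x3
    ring_nf
    linear_combination (X 0 ^ i * X 1 ^ j) * h
  rw [PA4, this, piA4_add, piA4_mul _ _ rho_a, piA4_mul _ _ rho_c, PA4, PA4]

lemma recY (i j : ℕ) : PA4 i (j + 3) = aA4 * PA4 i (j + 1) + cA4 * PA4 i j := by
  have : (X 0 : RR) ^ i * X 1 ^ (j + 3)
      = aA4 * (X 0 ^ i * X 1 ^ (j + 1)) + cA4 * (X 0 ^ i * X 1 ^ j) := by
    have h := y3
    linear_combination (X 0 ^ i * X 1 ^ j) * h
  rw [PA4, this, piA4_add, piA4_mul _ _ rho_a, piA4_mul _ _ rho_c, PA4, PA4]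

-- base cases
lemma P00 : PA4 0 0 = 1 := by
  simp only [PA4, piA4, pow_zero, mul_one, map_one]
  linear_combination h2

lemma P10 : PA4 1 0 = 0 := by
  simp only [PA4, piA4, pow_zero, pow_one, mul_one, rhoA4, aeval_X, Matrix.cons_val_zero,
    Matrix.cons_val_one, Matrix.head_cons, map_add]
  linear_combination (X 0 + X 1) * h2

lemma P01 : PA4 0 1 = 0 := by
  simp only [PA4, piA4, pow_zero, pow_one, one_mul, rhoA4, aeval_X, Matrix.cons_val_zero,
    Matrix.cons_val_one, Matrix.head_cons, map_add]
  linear_combination (X 0 + 2 * X 1) * h2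

lemma P20 : PA4 2 0 = 0 := by
  simp only [PA4, piA4, pow_zero, mul_one, rhoA4, map_add, map_pow, aeval_X,
    Matrix.cons_val_zero, Matrix.cons_val_one, Matrix.head_cons]
  linear_combination (X 0 ^ 2 + X 0 * X 1 + X 1 ^ 2) * h2

lemma P02 : PA4 0 2 = 0 := by
  simp only [PA4, piA4, pow_zero, one_mul, rhoA4, map_add, map_pow, aeval_X,
    Matrix.cons_val_zero, Matrix.cons_val_one, Matrix.head_cons]
  linear_combination (X 0 ^ 2 + 3 * X 0 * X 1 + 3 * X 1 ^ 2) * h2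

lemma P11 : PA4 1 1 = aA4 := by
  simp only [PA4, piA4, pow_one, aA4, rhoA4, map_add, map_mul, map_pow, aeval_X,
    Matrix.cons_val_zero, Matrix.cons_val_one, Matrix.head_cons]
  linear_combination (2 * X 0 * X 1 + X 1 ^ 2) * h2

lemma P21 : PA4 2 1 = bPlus := by
  simp only [PA4, piA4, pow_one, bPlus, rhoA4, map_add, map_mul, map_pow, aeval_X,
    Matrix.cons_val_zero, Matrix.cons_val_one, Matrix.head_cons]
  linear_combination (X 1 ^ 3 + 3 * X 0 * X 1 ^ 2 + 2 * X 0 ^ 2 * X 1) * h2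

lemma P12 : PA4 1 2 = bMinus := by
  simp only [PA4, piA4, pow_one, bMinus, rhoA4, map_add, map_mul, map_pow, aeval_X,
    Matrix.cons_val_zero, Matrix.cons_val_one, Matrix.head_cons]
  linear_combination (2 * X 1 ^ 3 + 5 * X 0 * X 1 ^ 2 + 3 * X 0 ^ 2 * X 1) * h2

lemma P22 : PA4 2 2 = aA4 ^ 2 := by
  simp only [PA4, piA4, aA4, rhoA4, map_add, map_mul, map_pow, aeval_X,
    Matrix.cons_val_zero, Matrix.cons_val_one, Matrix.head_cons]
  linear_combination (2 * X 1 ^ 4 + 6 * X 0 * X 1 ^ 3 + 6 * X 0 ^ 2 * X 1 ^ 2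
    + 2 * X 0 ^ 3 * X 1) * h2

noncomputable def SA4 : Subalgebra (ZMod 2) RR := Algebra.adjoin (ZMod 2) {aA4, bPlus, bMinus}

lemma a_mem : aA4 ∈ SA4 := Algebra.subset_adjoin (by simp)
lemma bp_mem : bPlus ∈ SA4 := Algebra.subset_adjoin (by simp)
lemma bm_mem : bMinus ∈ SA4 := Algebra.subset_adjoin (by simp)
lemma c_mem : cA4 ∈ SA4 := add_mem bp_mem bm_mem

lemma P_mem : ∀ i j : ℕ, PA4 i j ∈ SA4 := by
  have key : ∀ n : ℕ, ∀ i j : ℕ, i + j ≤ n → PA4 i j ∈ SA4 := by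
    intro n
    induction n with
    | zero =>
      intro i j hij
      obtain ⟨rfl, rfl⟩ : i = 0 ∧ j = 0 := by omega
      rw [P00]; exact one_mem _
    | succ n ih =>
      intro i j hij
      by_cases hi : 3 ≤ i
      · obtain ⟨i', rfl⟩ : ∃ i', i = i' + 3 := ⟨i - 3, by omega⟩
        rw [recX]
        exact add_mem (mul_mem a_mem (ih _ _ (by omega))) (mul_mem c_mem (ih _ _ (by omega)))
      · by_cases hj : 3 ≤ j
        · obtain ⟨j', rfl⟩ : ∃ j', j = j' + 3 := ⟨j - 3, by omega⟩
          rw [recY]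
          exact add_mem (mul_mem a_mem (ih _ _ (by omega))) (mul_mem c_mem (ih _ _ (by omega)))
        · interval_cases i <;> interval_cases j <;>
            simp only [P00, P10, P01, P20, P02, P11, P21, P12, P22] <;>
            first
              | exact one_mem _
              | exact zero_mem _
              | exact a_mem
              | exact bp_mem
              | exact bm_mem
              | exact pow_mem a_mem 2
  exact fun i j => key (i + j) i j le_rfl

lemma rho_C (r : ZMod 2) : rhoA4 (C r) = C r := by
  have := rhoA4.commutes r
  simp only [MvPolynomial.algebraMap_eq] at this
  exact this

lemma pi_mem (f : RR) : piA4 f ∈ SA4 := by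
  induction f using MvPolynomial.induction_on' with
  | add p q hp hq => rw [piA4_add]; exact add_mem hp hq
  | monomial d r =>
    have hmono : (monomial d r : RR) = C r * (X 0 ^ d 0 * X 1 ^ d 1) := by
      rw [monomial_eq, Finsupp.prod_fintype _ _ (fun i => pow_zero _), Fin.prod_univ_two]
    rw [hmono, piA4_mul _ _ (rho_C r)]
    have : C r ∈ SA4 := by
      rw [← MvPolynomial.algebraMap_eq]
      exact SA4.algebraMap_mem r
    exact mul_mem this (P_mem (d 0) (d 1))

end A4Aux

/-- The subalgebra of `ρ`-invariants equals the `(ZMod 2)`-subalgebra generated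
by `a`, `b₊` and `b₋` (the mod-2 cohomology of the alternating group `A₄`). -/
theorem stmt2 :
    AlgHom.equalizer rhoA4 (AlgHom.id (ZMod 2) (MvPolynomial (Fin 2) (ZMod 2))) =
      Algebra.adjoin (ZMod 2) {aA4, bPlus, bMinus} := by
  apply le_antisymm
  · intro f hf
    have hf' : rhoA4 f = f := by simpa [AlgHom.mem_equalizer] using hf
    have hpi : A4Aux.piA4 f = f := by
      rw [A4Aux.piA4, hf', hf']
      linear_combination f * A4Aux.h2
    have := A4Aux.pi_mem f
    rwa [hpi] at this
  · apply Algebra.adjoin_le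
    rintro g hg
    simp only [Set.mem_insert_iff, Set.mem_singleton_iff] at hg
    rw [SetLike.mem_coe, AlgHom.mem_equalizer, AlgHom.id_apply]
    rcases hg with rfl | rfl | rfl
    · exact A4Aux.rho_a
    · exact A4Aux.rho_bp
    · exact A4Aux.rho_bm
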